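/- Let A, C, M, r₀, δ₀ > 0 and B, E ∈ ℝ with A E = B C, and suppose f : ℂ × (0, δ₀) → ℂ has the form f(ω, δ) = −A ω² − i B ω³ + C δ + i E ω δ + r(ω, δ), where |r(ω, δ)| ≤ M (|ω|⁴ + δ |ω|² + δ²) whenever |ω| ≤ r₀ and 0 < δ < δ₀. Then there exist ε > 0 and M′ > 0 such that for every δ ∈ (0, ε) and every ω ∈ ℂ with |ω| ≤ ε and f(ω, δ) = 0, one has min( |ω − √(Cδ/A)| , |ω + √(Cδ/A)| ) ≤ M′ δ^{3/2}. -/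

import Mathlib

set_option maxHeartbeats 2000000


/-- Let `f(ω, δ) = −Aω² − iBω³ + Cδ + iEωδ + r(ω, δ)` with `A, C > 0`, the compatibility
condition `A E = B C`, and a remainder bounded by `M(|ω|⁴ + δ|ω|² + δ²)` for `|ω| ≤ r₀`
and `0 < δ < δ₀`. Then there exist `ε > 0` and `M′ > 0` such that every zero `ω` of
`f(·, δ)` with `|ω| ≤ ε` and `δ ∈ (0, ε)` satisfies
`min(|ω − √(Cδ/A)|, |ω + √(Cδ/A)|) ≤ M′ δ^{3/2}`. -/
theorem zeros_close_to_minnaert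
    (A C M r₀ δ₀ : ℝ) (B E : ℝ)
    (hA : 0 < A) (hC : 0 < C) (hM : 0 < M) (hr₀ : 0 < r₀) (hδ₀ : 0 < δ₀)
    (hcompat : A * E = B * C)
    (f r : ℂ → ℝ → ℂ)
    (hf : ∀ (ω : ℂ) (δ : ℝ), 0 < δ → δ < δ₀ →
      f ω δ = -(A : ℂ) * ω ^ 2 - Complex.I * (B : ℂ) * ω ^ 3 + (C : ℂ) * (δ : ℂ)
        + Complex.I * (E : ℂ) * ω * (δ : ℂ) + r ω δ)
    (hr : ∀ (ω : ℂ) (δ : ℝ), ‖ω‖ ≤ r₀ → 0 < δ → δ < δ₀ →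
      ‖r ω δ‖ ≤ M * (‖ω‖ ^ 4 + δ * ‖ω‖ ^ 2 + δ ^ 2)) :
    ∃ ε > 0, ∃ M' > 0, ∀ δ : ℝ, 0 < δ → δ < ε →
      ∀ ω : ℂ, ‖ω‖ ≤ ε → f ω δ = 0 →
        min ‖ω - (Real.sqrt (C * δ / A) : ℂ)‖ ‖ω + (Real.sqrt (C * δ / A) : ℂ)‖ ≤
          M' * δ ^ ((3 : ℝ) / 2) := by
  classical
  set K : ℝ := (2 * C + 4 * M) / A with hK
  have hKpos : 0 < K := by positivity
  set C₁ : ℝ := (2 * M / A) * (K ^ 2 + K + 1) with hC₁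
  have hC₁pos : 0 < C₁ := by positivity
  set M' : ℝ := C₁ * Real.sqrt (A / C) with hM'
  have hM'pos : 0 < M' := by
    have : 0 < Real.sqrt (A / C) := Real.sqrt_pos.mpr (by positivity)
    positivity
  set ε : ℝ := min (min δ₀ 1) (min (A / (2 * (|B| + 1))) (min (A / (8 * M)) r₀)) with hε
  have hεpos : 0 < ε := by
    have h1 : (0:ℝ) < |B| + 1 := by positivity
    exact lt_min (lt_min hδ₀ one_pos) (lt_min (by positivity) (lt_min (by positivity) hr₀))
  refine ⟨ε, hεpos, M', hM'pos, ?_⟩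
  intro δ hδ0 hδε ω hωε hf0
  have hεδ₀ : ε ≤ δ₀ := le_trans (min_le_left _ _) (min_le_left _ _)
  have hε1 : ε ≤ 1 := le_trans (min_le_left _ _) (min_le_right _ _)
  have hεB : ε ≤ A / (2 * (|B| + 1)) :=
    le_trans (min_le_right _ _) (min_le_left _ _)
  have hεM : ε ≤ A / (8 * M) :=
    le_trans (min_le_right _ _) (le_trans (min_le_right _ _) (min_le_left _ _))
  have hεr₀ : ε ≤ r₀ :=
    le_trans (min_le_right _ _) (le_trans (min_le_right _ _) (min_le_right _ _))
  have hδδ₀ : δ < δ₀ := lt_of_lt_of_le hδε hεδ₀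
  have hδ1 : δ ≤ 1 := le_of_lt (lt_of_lt_of_le hδε hε1)
  have hωr₀ : ‖ω‖ ≤ r₀ := le_trans hωε hεr₀
  have hAne : (A : ℂ) ≠ 0 := by exact_mod_cast hA.ne'
  have heq := hf ω δ hδ0 hδδ₀
  rw [hf0] at heq
  have hcompatC : (A : ℂ) * E = (B : ℂ) * C := by exact_mod_cast hcompat
  set t : ℝ := C * δ / A with ht
  have htpos : 0 < t := by positivity
  -- key factorization
  have key : ((A : ℂ) + Complex.I * B * ω) * (ω ^ 2 - (t : ℂ)) = r ω δ := by
    have htA : (t : ℂ) * (A : ℂ) = (C : ℂ) * (δ : ℂ) := by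
      rw [show (t : ℂ) = ((C * δ / A : ℝ) : ℂ) from by rw [ht]]
      push_cast
      field_simp
    have h2 : ((A : ℂ) + Complex.I * B * ω) * (ω ^ 2 - (t : ℂ)) * A = r ω δ * A := by
      linear_combination (A : ℂ) * heq + (Complex.I * ω * (δ : ℂ)) * hcompatC
        - ((A : ℂ) + Complex.I * (B : ℂ) * ω) * htA
    exact mul_right_cancel₀ hAne h2
  -- lower bound on the first factor
  have hfac : A / 2 ≤ ‖(A : ℂ) + Complex.I * B * ω‖ := by
    have h1 : ‖(A : ℂ)‖ ≤ ‖(A : ℂ) + Complex.I * B * ω‖ + ‖Complex.I * (B : ℂ) * ω‖ := by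
      calc ‖(A : ℂ)‖ = ‖((A : ℂ) + Complex.I * B * ω) + (-(Complex.I * (B:ℂ) * ω))‖ := by
            congr 1; ring
        _ ≤ ‖(A : ℂ) + Complex.I * B * ω‖ + ‖-(Complex.I * (B:ℂ) * ω)‖ := norm_add_le _ _
        _ = ‖(A : ℂ) + Complex.I * B * ω‖ + ‖Complex.I * (B:ℂ) * ω‖ := by rw [norm_neg]
    have h2 : ‖Complex.I * (B:ℂ) * ω‖ = |B| * ‖ω‖ := by
      simp [norm_mul, Complex.norm_real]
    have h3 : ‖(A : ℂ)‖ = A := by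
      simp [Complex.norm_real, abs_of_pos hA]
    have h4 : |B| * ‖ω‖ ≤ A / 2 := by
      have hB0 : (0:ℝ) ≤ |B| := abs_nonneg B
      have h5 : |B| * ‖ω‖ ≤ (|B| + 1) * ε := by nlinarith [norm_nonneg ω]
      have h6 := (le_div_iff₀ (by positivity : (0:ℝ) < 2 * (|B| + 1))).mp hεB
      nlinarith
    rw [h2, h3] at h1
    linarith
  -- bound on the quadratic factor
  have hrb := hr ω δ hωr₀ hδ0 hδδ₀
  have hnorm_prod : ‖(A : ℂ) + Complex.I * B * ω‖ * ‖ω ^ 2 - (t : ℂ)‖ = ‖r ω δ‖ := by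
    rw [← norm_mul, key]
  have hquad : ‖ω ^ 2 - (t : ℂ)‖ ≤ (2 * M / A) * (‖ω‖ ^ 4 + δ * ‖ω‖ ^ 2 + δ ^ 2) := by
    have h0 : (0:ℝ) ≤ ‖ω ^ 2 - (t : ℂ)‖ := norm_nonneg _
    have h5 : (A / 2) * ‖ω ^ 2 - (t : ℂ)‖ ≤ M * (‖ω‖ ^ 4 + δ * ‖ω‖ ^ 2 + δ ^ 2) :=
      calc (A / 2) * ‖ω ^ 2 - (t : ℂ)‖
          ≤ ‖(A : ℂ) + Complex.I * B * ω‖ * ‖ω ^ 2 - (t : ℂ)‖ :=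
            mul_le_mul_of_nonneg_right hfac h0
        _ = ‖r ω δ‖ := hnorm_prod
        _ ≤ M * (‖ω‖ ^ 4 + δ * ‖ω‖ ^ 2 + δ ^ 2) := hrb
    rw [show (2 * M / A) * (‖ω‖ ^ 4 + δ * ‖ω‖ ^ 2 + δ ^ 2)
        = 2 * (M * (‖ω‖ ^ 4 + δ * ‖ω‖ ^ 2 + δ ^ 2)) / A by ring, le_div_iff₀ hA]
    linarith [h5]
  -- bound ‖ω‖² ≤ K δ
  set x : ℝ := ‖ω‖ with hxdef
  have hx0 : 0 ≤ x := norm_nonneg ω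
  have hxε : x ≤ ε := hωε
  have hx2 : x ^ 2 ≤ K * δ := by
    have h1 : x ^ 2 = ‖ω ^ 2‖ := by rw [hxdef, norm_pow]
    have h2 : ‖ω ^ 2‖ ≤ ‖ω ^ 2 - (t : ℂ)‖ + ‖(t : ℂ)‖ := by
      calc ‖ω ^ 2‖ = ‖(ω ^ 2 - (t : ℂ)) + (t : ℂ)‖ := by congr 1; ring
        _ ≤ _ := norm_add_le _ _
    have h3 : ‖(t : ℂ)‖ = t := by simp [Complex.norm_real, abs_of_pos htpos]
    have step : x ^ 2 ≤ t + (2 * M / A) * (x ^ 4 + δ * x ^ 2 + δ ^ 2) := by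
      rw [h3] at h2
      calc x ^ 2 = ‖ω ^ 2‖ := h1
        _ ≤ ‖ω ^ 2 - (t : ℂ)‖ + t := h2
        _ ≤ t + (2 * M / A) * (x ^ 4 + δ * x ^ 2 + δ ^ 2) := by linarith [hquad]
    have stepA : A * x ^ 2 ≤ A * t + 2 * M * (x ^ 4 + δ * x ^ 2 + δ ^ 2) := by
      calc A * x ^ 2 ≤ A * (t + (2 * M / A) * (x ^ 4 + δ * x ^ 2 + δ ^ 2)) :=
            mul_le_mul_of_nonneg_left step hA.le
        _ = A * t + 2 * M * (x ^ 4 + δ * x ^ 2 + δ ^ 2) := by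
            field_simp
    have hAt2 : A * t = C * δ := by rw [ht]; field_simp
    have hxsq : x ^ 2 ≤ ε * ε := by nlinarith
    have hx4 : x ^ 4 ≤ ε * x ^ 2 := by
      have h4a := mul_le_mul_of_nonneg_right hxsq (sq_nonneg x)
      have h4b : ε * ε * x ^ 2 ≤ ε * x ^ 2 := by nlinarith [sq_nonneg x]
      nlinarith [h4a, h4b]
    have hδx : δ * x ^ 2 ≤ ε * x ^ 2 := by nlinarith
    have h8 : 8 * M * ε ≤ A := by
      have := (le_div_iff₀ (by positivity : (0:ℝ) < 8 * M)).mp hεM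
      linarith
    -- A x² ≤ Cδ + 4Mε x² + 2Mδ²  and  4Mεx² ≤ (A/2)x²
    have h9 : 2 * M * (x ^ 4 + δ * x ^ 2) ≤ (A / 2) * x ^ 2 := by
      have h10 := mul_le_mul_of_nonneg_left (add_le_add hx4 hδx)
        (by positivity : (0:ℝ) ≤ 2 * M)
      have h11 := mul_le_mul_of_nonneg_right h8 (sq_nonneg x)
      linarith
    have h12 : A * x ^ 2 ≤ C * δ + (A / 2) * x ^ 2 + 2 * M * δ ^ 2 := by
      rw [hAt2] at stepA; linarith
    have hδ2 : δ ^ 2 ≤ δ := by nlinarith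
    have h13 : (A / 2) * x ^ 2 ≤ (C + 2 * M) * δ := by
      have := mul_le_mul_of_nonneg_left hδ2 hM.le
      linarith
    -- divide by A/2
    rw [hK, div_mul_eq_mul_div, le_div_iff₀ hA]
    linarith [h13]
  -- final quadratic bound
  have hquad2 : ‖ω ^ 2 - (t : ℂ)‖ ≤ C₁ * δ ^ 2 := by
    have hx4 : x ^ 4 ≤ K ^ 2 * δ ^ 2 := by
      have := mul_le_mul hx2 hx2 (sq_nonneg x) (by positivity : (0:ℝ) ≤ K * δ)
      linarith [this]
    have hx2' : δ * x ^ 2 ≤ K * δ ^ 2 := by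
      have := mul_le_mul_of_nonneg_left hx2 hδ0.le
      linarith [this]
    calc ‖ω ^ 2 - (t : ℂ)‖ ≤ (2 * M / A) * (x ^ 4 + δ * x ^ 2 + δ ^ 2) := hquad
      _ ≤ (2 * M / A) * (K ^ 2 * δ ^ 2 + K * δ ^ 2 + δ ^ 2) := by
          apply mul_le_mul_of_nonneg_left _ (by positivity)
          linarith
      _ = C₁ * δ ^ 2 := by rw [hC₁]; ring
  -- factor ω² - t = (ω - s)(ω + s)
  set s : ℝ := Real.sqrt t with hs
  have hspos : 0 < s := Real.sqrt_pos.mpr htpos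
  have hs2 : (s : ℂ) ^ 2 = (t : ℂ) := by
    have : s ^ 2 = t := Real.sq_sqrt htpos.le
    exact_mod_cast this
  have hfact : ω ^ 2 - (t : ℂ) = (ω - s) * (ω + s) := by rw [← hs2]; ring
  set a : ℝ := ‖ω - (s : ℂ)‖ with ha
  set b : ℝ := ‖ω + (s : ℂ)‖ with hb
  have hab : a * b ≤ C₁ * δ ^ 2 := by
    rw [ha, hb, ← norm_mul, ← hfact]; exact hquad2
  have hsum : 2 * s ≤ a + b := by
    have h1 : ‖(ω + (s:ℂ)) - (ω - (s:ℂ))‖ ≤ b + a := norm_sub_le _ _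
    have h2 : (ω + (s:ℂ)) - (ω - (s:ℂ)) = ((2 * s : ℝ) : ℂ) := by push_cast; ring
    rw [h2] at h1
    have h3 : ‖((2 * s : ℝ) : ℂ)‖ = 2 * s := by
      simp [Complex.norm_real, abs_of_pos hspos, hspos.le]
    rw [h3] at h1
    linarith
  have hmin : min a b * s ≤ C₁ * δ ^ 2 := by
    rcases le_total a b with h | h
    · rw [min_eq_left h]
      have hbs : s ≤ b := by linarith
      calc a * s ≤ a * b := mul_le_mul_of_nonneg_left hbs (norm_nonneg _)
        _ ≤ C₁ * δ ^ 2 := hab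
    · rw [min_eq_right h]
      have has : s ≤ a := by linarith
      calc b * s ≤ b * a := mul_le_mul_of_nonneg_left has (norm_nonneg _)
        _ ≤ C₁ * δ ^ 2 := by rw [mul_comm]; exact hab
  have hrs : M' * δ ^ ((3:ℝ)/2) * s = C₁ * δ ^ 2 := by
    have hsqrt : s = Real.sqrt (C / A) * Real.sqrt δ := by
      rw [hs, ht, show C * δ / A = (C / A) * δ by ring]
      exact Real.sqrt_mul (by positivity) δ
    have hprod : Real.sqrt (A / C) * Real.sqrt (C / A) = 1 := by
      rw [← Real.sqrt_mul (by positivity), show A / C * (C / A) = 1 by field_simp]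
      exact Real.sqrt_one
    have hpow : δ ^ ((3:ℝ)/2) * Real.sqrt δ = δ ^ 2 := by
      rw [Real.sqrt_eq_rpow, ← Real.rpow_add hδ0]
      norm_num
    rw [hM', hsqrt]
    calc C₁ * Real.sqrt (A / C) * δ ^ ((3:ℝ)/2) * (Real.sqrt (C / A) * Real.sqrt δ)
        = C₁ * (Real.sqrt (A / C) * Real.sqrt (C / A)) * (δ ^ ((3:ℝ)/2) * Real.sqrt δ) := by
          ring
      _ = C₁ * δ ^ 2 := by rw [hprod, hpow]; ring
  have hfinal : min a b ≤ M' * δ ^ ((3:ℝ)/2) := by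
    have h1 : min a b * s ≤ M' * δ ^ ((3:ℝ)/2) * s := by rw [hrs]; exact hmin
    exact le_of_mul_le_mul_right h1 hspos
  simpa [ha, hb, hs, ht] using hfinal
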